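/- arXiv:2006.00152 — 2 statements merged into one kernel-verified Lean document; each statement's English description precedes it below -/
import Mathlib

section
/- Let X be an n×n real symmetric matrix and let X_SUB be the (n−1)×(n−1) principal submatrix obtained by deleting the last row and last column of X. If σ_1 ≥ σ_2 ≥ … ≥ σ_n are the eigenvalues of X and σ_{SUB,1} ≥ σ_{SUB,2} ≥ … ≥ σ_{SUB,n−1} are the eigenvalues of X_SUB, then for every j ∈ {1,…,n−1} one has σ_j ≥ σ_{SUB,j} ≥ σ_{j+1}. -/
open Matrix


open Matrix Submodule Finset

open scoped RealInnerProductSpace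

noncomputable section Aux

variable {N : Type*} [Fintype N] [DecidableEq N]

/-- Quadratic form in terms of eigen-coordinates. -/
lemma quad_eq_sum {A : Matrix N N ℝ} (hA : A.IsHermitian) (x : EuclideanSpace ℝ N) :
    ⟪x, toEuclideanLin A x⟫ =
      ∑ i, hA.eigenvalues i * (hA.eigenvectorBasis.repr x i) ^ 2 := by
  set b := hA.eigenvectorBasis with hb
  have hTb : ∀ i, toEuclideanLin A (b i) = hA.eigenvalues i • (b i) := by
    intro i
    have := hA.mulVec_eigenvectorBasis i
    apply (WithLp.equiv 2 (N → ℝ)).injective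
    simpa [toEuclideanLin_apply] using this
  have hexp : toEuclideanLin A x = ∑ i, b.repr x i • (hA.eigenvalues i • b i) := by
    conv_lhs => rw [← b.sum_repr x]
    rw [map_sum]
    exact Finset.sum_congr rfl fun i _ => by rw [LinearMap.map_smul, hTb i]
  rw [hexp, inner_sum]
  refine Finset.sum_congr rfl fun i _ => ?_
  rw [smul_smul, real_inner_smul_right]
  have : ⟪x, b i⟫ = b.repr x i := by
    rw [real_inner_comm, b.repr_apply_apply]
  rw [this]; ring

lemma norm_sq_eq_sum {A : Matrix N N ℝ} (hA : A.IsHermitian) (x : EuclideanSpace ℝ N) :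
    ‖x‖ ^ 2 = ∑ i, (hA.eigenvectorBasis.repr x i) ^ 2 := by
  rw [← (hA.eigenvectorBasis.repr).norm_map x, EuclideanSpace.norm_eq,
    Real.sq_sqrt (by positivity)]
  simp [Real.norm_eq_abs, sq_abs]

lemma repr_eq_zero_of_mem_span {A : Matrix N N ℝ} (hA : A.IsHermitian) (S : Finset N)
    {x : EuclideanSpace ℝ N}
    (hx : x ∈ span ℝ (hA.eigenvectorBasis '' (S : Set N))) {i : N} (hi : i ∉ S) :
    hA.eigenvectorBasis.repr x i = 0 := by
  set b := hA.eigenvectorBasis with hb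
  have h1 : x ∈ span ℝ (b.toBasis '' (S : Set N)) := by rwa [b.coe_toBasis]
  have h2 := (Module.Basis.mem_span_image (b := b.toBasis)).1 h1
  have h3 : i ∉ (b.toBasis.repr x).support := fun h => hi (h2 h)
  have h4 : b.toBasis.repr x i = 0 := Finsupp.notMem_support_iff.1 h3
  rwa [b.coe_toBasis_repr_apply] at h4

lemma rayleigh_ge {A : Matrix N N ℝ} (hA : A.IsHermitian) (S : Finset N) (c : ℝ)
    (hc : ∀ i ∈ S, c ≤ hA.eigenvalues i) {x : EuclideanSpace ℝ N}
    (hx : x ∈ span ℝ (hA.eigenvectorBasis '' (S : Set N))) :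
    c * ‖x‖ ^ 2 ≤ ⟪x, toEuclideanLin A x⟫ := by
  rw [quad_eq_sum hA, norm_sq_eq_sum hA, Finset.mul_sum]
  refine Finset.sum_le_sum fun i _ => ?_
  by_cases hi : i ∈ S
  · exact mul_le_mul_of_nonneg_right (hc i hi) (sq_nonneg _)
  · rw [repr_eq_zero_of_mem_span hA S hx hi]; simp

lemma rayleigh_le {A : Matrix N N ℝ} (hA : A.IsHermitian) (S : Finset N) (c : ℝ)
    (hc : ∀ i ∈ S, hA.eigenvalues i ≤ c) {x : EuclideanSpace ℝ N}
    (hx : x ∈ span ℝ (hA.eigenvectorBasis '' (S : Set N))) :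
    ⟪x, toEuclideanLin A x⟫ ≤ c * ‖x‖ ^ 2 := by
  rw [quad_eq_sum hA, norm_sq_eq_sum hA, Finset.mul_sum]
  refine Finset.sum_le_sum fun i _ => ?_
  by_cases hi : i ∈ S
  · exact mul_le_mul_of_nonneg_right (hc i hi) (sq_nonneg _)
  · rw [repr_eq_zero_of_mem_span hA S hx hi]; simp

lemma finrank_span_eigen {A : Matrix N N ℝ} (hA : A.IsHermitian) (S : Finset N) :
    Module.finrank ℝ (span ℝ (hA.eigenvectorBasis '' (S : Set N))) = S.card := by
  set b := hA.eigenvectorBasis with hb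
  have hon : Orthonormal ℝ (fun i : (S : Set N) => b i) :=
    b.orthonormal.comp _ Subtype.val_injective
  have hli := hon.linearIndependent
  have hr : Set.range (fun i : (S : Set N) => b i) = b '' (S : Set N) := by
    ext y; simp [Set.range, Set.mem_image]
  rw [← hr, finrank_span_eq_card hli]
  simp

/-- counting lemma: at least k+1 eigenvalues are ≥ σ k -/
lemma count_ge {n : ℕ} (lam τ : Fin n → ℝ) (e : Fin n ≃ Fin n) (h : τ = lam ∘ e)
    (hτ : Antitone τ) (k : Fin n) [DecidablePred fun i => τ k ≤ lam i] :
    (k : ℕ) + 1 ≤ (Finset.univ.filter fun i => τ k ≤ lam i).card := by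
  have := Finset.card_le_card_of_injOn (f := e) (s := Finset.Iic k)
    (t := Finset.univ.filter fun i => τ k ≤ lam i)
    (fun i hi => by
      simp only [Finset.coe_filter, Set.mem_setOf_eq, Finset.mem_filter, Finset.mem_univ, true_and]
      have : τ k ≤ τ i := hτ (Finset.mem_Iic.1 hi)
      simpa [h] using this)
    (e.injective.injOn)
  simpa [Fin.card_Iic] using this

lemma count_le {n : ℕ} (lam τ : Fin n → ℝ) (e : Fin n ≃ Fin n) (h : τ = lam ∘ e)
    (hτ : Antitone τ) (k : Fin n) [DecidablePred fun i => lam i ≤ τ k] :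
    n - (k : ℕ) ≤ (Finset.univ.filter fun i => lam i ≤ τ k).card := by
  have := Finset.card_le_card_of_injOn (f := e) (s := Finset.Ici k)
    (t := Finset.univ.filter fun i => lam i ≤ τ k)
    (fun i hi => by
      simp only [Finset.coe_filter, Set.mem_setOf_eq, Finset.mem_filter, Finset.mem_univ, true_and]
      have : τ i ≤ τ k := hτ (Finset.mem_Ici.1 hi)
      simpa [h] using this)
    (e.injective.injOn)
  simpa [Fin.card_Ici] using this

/-- Extension by zero as a linear map `ℝ^m → ℝ^{m+1}`. -/
def liftL (m : ℕ) : EuclideanSpace ℝ (Fin m) →ₗ[ℝ] EuclideanSpace ℝ (Fin (m + 1)) where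
  toFun x := WithLp.toLp 2 (Fin.snoc x.ofLp 0 : Fin (m + 1) → ℝ)
  map_add' x y := by
    ext i
    induction i using Fin.lastCases with
    | last => simp
    | cast i => simp [Fin.snoc_castSucc]
  map_smul' c x := by
    ext i
    induction i using Fin.lastCases with
    | last => simp
    | cast i => simp [Fin.snoc_castSucc]

lemma liftL_inner {m : ℕ} (x y : EuclideanSpace ℝ (Fin m)) :
    ⟪liftL m x, liftL m y⟫ = ⟪x, y⟫ := by
  simp only [PiLp.inner_apply, RCLike.inner_apply, conj_trivial]
  rw [Fin.sum_univ_castSucc]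
  simp [liftL, Fin.snoc_castSucc, Fin.snoc_last]

lemma liftL_inj {m : ℕ} : Function.Injective (liftL m) := by
  intro x y h
  ext i
  have := congrFun (congrArg WithLp.ofLp h) (Fin.castSucc i)
  simpa [liftL, Fin.snoc_castSucc] using this

lemma liftL_quad {m : ℕ} (A : Matrix (Fin (m + 1)) (Fin (m + 1)) ℝ)
    (x : EuclideanSpace ℝ (Fin m)) :
    ⟪liftL m x, toEuclideanLin A (liftL m x)⟫ =
      ⟪x, toEuclideanLin (A.submatrix Fin.castSucc Fin.castSucc) x⟫ := by
  simp only [PiLp.inner_apply, RCLike.inner_apply, conj_trivial, toEuclideanLin_apply]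
  rw [Fin.sum_univ_castSucc]
  simp only [liftL, LinearMap.coe_mk, AddHom.coe_mk, Fin.snoc_castSucc, Fin.snoc_last, zero_mul,
    add_zero, WithLp.ofLp_toLp, mul_zero]
  refine Finset.sum_congr rfl fun i _ => ?_
  congr 1
  show (A *ᵥ (Fin.snoc x.ofLp 0 : Fin (m+1) → ℝ)) (Fin.castSucc i) = _
  show _ = ((A.submatrix Fin.castSucc Fin.castSucc) *ᵥ x.ofLp) i
  simp only [mulVec, dotProduct, submatrix_apply]
  rw [Fin.sum_univ_castSucc]
  simp [Fin.snoc_castSucc, Fin.snoc_last]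

end Aux


open scoped RealInnerProductSpace in
open Submodule in
/-- Cauchy interlacing: if `X` is an `(m+1)×(m+1)` real symmetric matrix
and `Xsub` is the principal submatrix obtained by deleting the last row and column,
then the descending eigenvalues `σ` of `X` and `ν` of `Xsub` (with multiplicity)
satisfy `σ_j ≥ ν_j ≥ σ_{j+1}` for all `j`. -/
theorem stmt1 {m : ℕ} (X : Matrix (Fin (m + 1)) (Fin (m + 1)) ℝ)
    (hX : X.IsHermitian)
    (hXsub : (X.submatrix (Fin.castSucc : Fin m → Fin (m + 1)) Fin.castSucc).IsHermitian)
    (σ : Fin (m + 1) → ℝ) (ν : Fin m → ℝ)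
    (hσ : Antitone σ) (hν : Antitone ν)
    (eσ : Fin (m + 1) ≃ Fin (m + 1)) (hσe : σ = hX.eigenvalues ∘ eσ)
    (eν : Fin m ≃ Fin m) (hνe : ν = hXsub.eigenvalues ∘ eν) :
    ∀ j : Fin m, σ j.castSucc ≥ ν j ∧ ν j ≥ σ j.succ := by
  classical
  intro j
  have hj : (j : ℕ) < m := j.isLt
  have htot : Module.finrank ℝ (EuclideanSpace ℝ (Fin (m + 1))) = m + 1 := by
    simp [finrank_euclideanSpace]
  constructor
  · -- σ j.castSucc ≥ ν j
    set Ssub : Finset (Fin m) := Finset.univ.filter fun i => ν j ≤ hXsub.eigenvalues i with hSsub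
    set Sbig : Finset (Fin (m + 1)) :=
      Finset.univ.filter fun i => hX.eigenvalues i ≤ σ j.castSucc with hSbig
    have hcard1 : (j : ℕ) + 1 ≤ Ssub.card := count_ge _ ν eν hνe hν j
    have hcard2 : (m + 1) - (j : ℕ) ≤ Sbig.card := count_le _ σ eσ hσe hσ j.castSucc
    set A1 : Submodule ℝ (EuclideanSpace ℝ (Fin (m + 1))) :=
      Submodule.map (liftL m) (span ℝ (hXsub.eigenvectorBasis '' (Ssub : Set (Fin m)))) with hA1
    set B1 := span ℝ (hX.eigenvectorBasis '' (Sbig : Set (Fin (m + 1)))) with hB1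
    have hfA : Module.finrank ℝ A1 = Ssub.card := by
      rw [← finrank_span_eigen hXsub Ssub]
      exact ((Submodule.equivMapOfInjective _ liftL_inj _).finrank_eq).symm
    have hfB : Module.finrank ℝ B1 = Sbig.card := finrank_span_eigen hX Sbig
    have hsum := Submodule.finrank_sup_add_finrank_inf_eq A1 B1
    have hle : Module.finrank ℝ ↥(A1 ⊔ B1) ≤ m + 1 := by
      have := Submodule.finrank_le (A1 ⊔ B1); rwa [htot] at this
    have hpos : 0 < Module.finrank ℝ ↥(A1 ⊓ B1) := by omega
    obtain ⟨x, hxmem, hxne⟩ : ∃ x, x ∈ A1 ⊓ B1 ∧ x ≠ 0 := by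
      refine Submodule.exists_mem_ne_zero_of_ne_bot fun h => ?_
      rw [h, finrank_bot] at hpos; exact lt_irrefl 0 hpos
    obtain ⟨hxA, hxB⟩ := hxmem
    obtain ⟨y, hy, rfl⟩ := hxA
    have hnorm : ‖liftL m y‖ ^ 2 = ‖y‖ ^ 2 := by
      rw [← real_inner_self_eq_norm_sq, ← real_inner_self_eq_norm_sq, liftL_inner]
    have h1 : ν j * ‖liftL m y‖ ^ 2 ≤ ⟪liftL m y, toEuclideanLin X (liftL m y)⟫ := by
      rw [hnorm, liftL_quad]
      exact rayleigh_ge hXsub Ssub (ν j) (fun i hi => (Finset.mem_filter.1 hi).2) hy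
    have h2 : ⟪liftL m y, toEuclideanLin X (liftL m y)⟫ ≤ σ j.castSucc * ‖liftL m y‖ ^ 2 :=
      rayleigh_le hX Sbig _ (fun i hi => (Finset.mem_filter.1 hi).2) hxB
    have hn : (0:ℝ) < ‖liftL m y‖ ^ 2 := by
      have := norm_pos_iff.mpr hxne
      positivity
    exact (mul_le_mul_iff_of_pos_right hn).1 (h1.trans h2)
  · -- ν j ≥ σ j.succ
    set Sbig2 : Finset (Fin (m + 1)) :=
      Finset.univ.filter fun i => σ j.succ ≤ hX.eigenvalues i with hSbig2
    set Ssub2 : Finset (Fin m) :=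
      Finset.univ.filter fun i => hXsub.eigenvalues i ≤ ν j with hSsub2
    have hcard1 : (j : ℕ) + 2 ≤ Sbig2.card := by
      have := count_ge _ σ eσ hσe hσ j.succ
      simpa [Fin.val_succ, Nat.add_assoc] using this
    have hcard2 : m - (j : ℕ) ≤ Ssub2.card := count_le _ ν eν hνe hν j
    set R := LinearMap.range (liftL m) with hR
    have hfR : Module.finrank ℝ R = m := by
      rw [LinearMap.finrank_range_of_inj liftL_inj]
      simp [finrank_euclideanSpace]
    set W := span ℝ (hX.eigenvectorBasis '' (Sbig2 : Set (Fin (m + 1)))) with hW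
    have hfW : Module.finrank ℝ W = Sbig2.card := finrank_span_eigen hX Sbig2
    set A2 := W ⊓ R with hA2
    have hfA2 : (j : ℕ) + 1 ≤ Module.finrank ℝ ↥A2 := by
      have hsum := Submodule.finrank_sup_add_finrank_inf_eq W R
      have hle : Module.finrank ℝ ↥(W ⊔ R) ≤ m + 1 := by
        have := Submodule.finrank_le (W ⊔ R); rwa [htot] at this
      rw [hA2]
      omega
    set B2 : Submodule ℝ (EuclideanSpace ℝ (Fin (m + 1))) :=
      Submodule.map (liftL m) (span ℝ (hXsub.eigenvectorBasis '' (Ssub2 : Set (Fin m)))) with hB2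
    have hfB2 : Module.finrank ℝ B2 = Ssub2.card := by
      rw [← finrank_span_eigen hXsub Ssub2]
      exact ((Submodule.equivMapOfInjective _ liftL_inj _).finrank_eq).symm
    have hsupR : A2 ⊔ B2 ≤ R := sup_le inf_le_right (Submodule.map_le_iff_le_comap.2
      (fun z _ => LinearMap.mem_range_self _ z))
    have hle2 : Module.finrank ℝ ↥(A2 ⊔ B2) ≤ m :=
      le_trans (Submodule.finrank_mono hsupR) (le_of_eq hfR)
    have hsum2 := Submodule.finrank_sup_add_finrank_inf_eq A2 B2
    have hpos : 0 < Module.finrank ℝ ↥(A2 ⊓ B2) := by omega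
    obtain ⟨x, hxmem, hxne⟩ : ∃ x, x ∈ A2 ⊓ B2 ∧ x ≠ 0 := by
      refine Submodule.exists_mem_ne_zero_of_ne_bot fun h => ?_
      rw [h, finrank_bot] at hpos; exact lt_irrefl 0 hpos
    obtain ⟨⟨hxW, _⟩, hxB⟩ := hxmem
    obtain ⟨y, hy, rfl⟩ := hxB
    have hnorm : ‖liftL m y‖ ^ 2 = ‖y‖ ^ 2 := by
      rw [← real_inner_self_eq_norm_sq, ← real_inner_self_eq_norm_sq, liftL_inner]
    have h1 : σ j.succ * ‖liftL m y‖ ^ 2 ≤ ⟪liftL m y, toEuclideanLin X (liftL m y)⟫ :=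
      rayleigh_ge hX Sbig2 _ (fun i hi => (Finset.mem_filter.1 hi).2) hxW
    have h2 : ⟪liftL m y, toEuclideanLin X (liftL m y)⟫ ≤ ν j * ‖liftL m y‖ ^ 2 := by
      rw [hnorm, liftL_quad]
      exact rayleigh_le hXsub Ssub2 (ν j) (fun i hi => (Finset.mem_filter.1 hi).2) hy
    have hn : (0:ℝ) < ‖liftL m y‖ ^ 2 := by
      have := norm_pos_iff.mpr hxne
      positivity
    exact (mul_le_mul_iff_of_pos_right hn).1 (h1.trans h2)
end

section
/- Let M be the p×p real symmetric arrowhead matrix with M_{11} = d, M_{1,s+1} = M_{s+1,1} = b_s, M_{s+1,s+1} = ν_s (s = 1,…,p−1), where ν_1 > ν_2 > … > ν_{p−1} and b_s ≠ 0 for all s. Then the function y ↦ d + Σ_{s=1}^{p−1} b_s²/(y − ν_s) − y is strictly decreasing on each interval (ν_s, ν_{s−1}) (with ν_0 = +∞, ν_p = −∞) and tends to +∞ and −∞ at the left and right endpoints respectively; consequently M has p distinct eigenvalues λ_1 > λ_2 > … > λ_p that strictly interlace the ν's: λ_1 > ν_1 > λ_2 > ν_2 > … > ν_{p−1} > λ_p.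 -/
open Filter Topology Finset

/-- The `(m+1)×(m+1)` real symmetric arrowhead matrix with top-left entry `d`,
first row/column entries `b s` and remaining diagonal `ν s`. -/
noncomputable def arrowhead {m : ℕ} (d : ℝ) (b ν : Fin m → ℝ) :
    Matrix (Fin (m + 1)) (Fin (m + 1)) ℝ :=
  Matrix.of fun i j =>
    Fin.cases (Fin.cases d b j)
      (fun s => Fin.cases (b s) (fun t => if s = t then ν s else 0) j) i

namespace Stmt4Aux

variable {m : ℕ}

noncomputable def secular (d : ℝ) (b ν : Fin m → ℝ) (y : ℝ) : ℝ :=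
  d + ∑ s, b s ^ 2 / (y - ν s) - y

theorem mono (d : ℝ) (b ν : Fin m → ℝ) {x y : ℝ} (hxy : x < y)
    (h : ∀ s, ν s ∉ Set.Icc x y) : secular d b ν y < secular d b ν x := by
  have hsum : ∀ s ∈ univ, b s ^ 2 / (y - ν s) ≤ b s ^ 2 / (x - ν s) := by
    intro s _
    rcases lt_or_ge (ν s) x with h1 | h1
    · have h2 : 0 < x - ν s := by linarith
      gcongr
    · have h2 : y < ν s := by
        by_contra h3
        exact h s ⟨h1, le_of_not_gt h3⟩
      rw [show y - ν s = -(ν s - y) by ring, show x - ν s = -(ν s - x) by ring,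
        div_neg, div_neg, neg_le_neg_iff]
      have h3 : 0 < ν s - y := by linarith
      gcongr
  have := Finset.sum_le_sum hsum
  unfold secular
  linarith

theorem secular_continuousAt (d : ℝ) (b ν : Fin m → ℝ) {z : ℝ} (hz : ∀ s, z ≠ ν s) :
    ContinuousAt (secular d b ν) z := by
  unfold secular
  refine ContinuousAt.sub (ContinuousAt.add continuousAt_const ?_) continuousAt_id
  exact tendsto_finset_sum _ fun s _ =>
    ContinuousAt.div continuousAt_const (continuousAt_id.sub continuousAt_const)
      (sub_ne_zero.mpr (hz s))

theorem tendsto_atTop (d : ℝ) (b ν : Fin m → ℝ) :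
    Tendsto (secular d b ν) atTop atBot := by
  have hsum : Tendsto (fun y : ℝ => d + ∑ s, b s ^ 2 / (y - ν s)) atTop (𝓝 (d + 0)) := by
    refine Tendsto.add tendsto_const_nhds ?_
    have := tendsto_finset_sum (univ : Finset (Fin m))
      (fun s _ => Tendsto.div_atTop (tendsto_const_nhds (x := b s ^ 2))
        (tendsto_atTop_add_const_right atTop (-ν s) tendsto_id))
    simpa [sub_eq_add_neg] using this
  have hneg : Tendsto (fun y : ℝ => -y) atTop atBot := tendsto_neg_atTop_atBot
  have := Tendsto.add_atBot hsum hneg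
  unfold secular; simpa [ sub_eq_add_neg] using this

theorem div_tendsto_zero_atBot (c v : ℝ) :
    Tendsto (fun y : ℝ => c / (y - v)) atBot (𝓝 0) := by
  have h1 : Tendsto (fun y : ℝ => v - y) atBot atTop := by
    simpa [sub_eq_add_neg] using
      tendsto_atTop_add_const_left atBot v (tendsto_neg_atBot_atTop (G := ℝ))
  have h2 := (Tendsto.div_atTop (tendsto_const_nhds (x := c)) h1).neg
  have h3 : (fun y : ℝ => -(c / (v - y))) = fun y : ℝ => c / (y - v) := by
    funext y
    rw [← div_neg]
    ring_nf
  rw [h3] at h2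
  simpa using h2

theorem tendsto_atBot (d : ℝ) (b ν : Fin m → ℝ) :
    Tendsto (secular d b ν) atBot atTop := by
  have hsum : Tendsto (fun y : ℝ => d + ∑ s, b s ^ 2 / (y - ν s)) atBot (𝓝 (d + 0)) := by
    refine Tendsto.add tendsto_const_nhds ?_
    have := tendsto_finset_sum (univ : Finset (Fin m))
      (fun s _ => div_tendsto_zero_atBot (b s ^ 2) (ν s))
    simpa using this
  have hneg : Tendsto (fun y : ℝ => -y) atBot atTop := tendsto_neg_atBot_atTop
  have := Tendsto.add_atTop hsum hneg
  unfold secular; simpa [ sub_eq_add_neg] using this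

theorem tendsto_nhdsGT (d : ℝ) (b ν : Fin m → ℝ) (hν : Function.Injective ν)
    (hb : ∀ s, b s ≠ 0) (s : Fin m) :
    Tendsto (secular d b ν) (𝓝[>] (ν s)) atTop := by
  have hb2 : 0 < b s ^ 2 := (sq_nonneg _).lt_of_ne (Ne.symm (pow_ne_zero 2 (hb s)))
  have hrepr : secular d b ν = fun y =>
      b s ^ 2 / (y - ν s) + (d + ∑ t ∈ univ.erase s, b t ^ 2 / (y - ν t) - y) := by
    funext y
    unfold secular
    rw [← Finset.add_sum_erase _ (fun t => b t ^ 2 / (y - ν t)) (mem_univ s)]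
    ring
  rw [hrepr]
  refine Tendsto.atTop_add (C := d + ∑ t ∈ univ.erase s, b t ^ 2 / (ν s - ν t) - ν s) ?_ ?_
  · have h0 : Tendsto (fun y : ℝ => y - ν s) (𝓝[>] ν s) (𝓝[>] 0) := by
      apply tendsto_nhdsWithin_of_tendsto_nhds_of_eventually_within
      · have : Tendsto (fun y : ℝ => y - ν s) (𝓝 (ν s)) (𝓝 (ν s - ν s)) :=
          (continuous_id.sub continuous_const).tendsto _
        simpa using this.mono_left nhdsWithin_le_nhds
      · filter_upwards [self_mem_nhdsWithin] with x hx
        exact sub_pos.mpr hx.out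
    simpa [div_eq_mul_inv] using Tendsto.const_mul_atTop hb2 h0.inv_tendsto_nhdsGT_zero
  · have hcont : ContinuousAt
        (fun y : ℝ => d + ∑ t ∈ univ.erase s, b t ^ 2 / (y - ν t) - y) (ν s) := by
      refine ContinuousAt.sub (ContinuousAt.add continuousAt_const ?_) continuousAt_id
      refine tendsto_finset_sum _ fun t ht => ?_
      exact ContinuousAt.div continuousAt_const (continuousAt_id.sub continuousAt_const)
        (sub_ne_zero.mpr fun hEq => (Finset.mem_erase.mp ht).1 (hν hEq).symm)
    exact hcont.tendsto.mono_left nhdsWithin_le_nhds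

theorem tendsto_nhdsLT (d : ℝ) (b ν : Fin m → ℝ) (hν : Function.Injective ν)
    (hb : ∀ s, b s ≠ 0) (s : Fin m) :
    Tendsto (secular d b ν) (𝓝[<] (ν s)) atBot := by
  have hb2 : 0 < b s ^ 2 := (sq_nonneg _).lt_of_ne (Ne.symm (pow_ne_zero 2 (hb s)))
  have hrepr : secular d b ν = fun y =>
      -(b s ^ 2 / (ν s - y)) + (d + ∑ t ∈ univ.erase s, b t ^ 2 / (y - ν t) - y) := by
    funext y
    unfold secular
    rw [← Finset.add_sum_erase _ (fun t => b t ^ 2 / (y - ν t)) (mem_univ s)]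
    rw [show y - ν s = -(ν s - y) by ring, div_neg]
    ring
  rw [hrepr]
  refine Tendsto.atBot_add (C := d + ∑ t ∈ univ.erase s, b t ^ 2 / (ν s - ν t) - ν s) ?_ ?_
  · have h0 : Tendsto (fun y : ℝ => ν s - y) (𝓝[<] ν s) (𝓝[>] 0) := by
      apply tendsto_nhdsWithin_of_tendsto_nhds_of_eventually_within
      · have : Tendsto (fun y : ℝ => ν s - y) (𝓝 (ν s)) (𝓝 (ν s - ν s)) :=
          (continuous_const.sub continuous_id).tendsto _
        simpa using this.mono_left nhdsWithin_le_nhds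
      · filter_upwards [self_mem_nhdsWithin] with x hx
        exact sub_pos.mpr hx.out
    have h1 : Tendsto (fun y : ℝ => b s ^ 2 / (ν s - y)) (𝓝[<] ν s) atTop := by
      simpa [div_eq_mul_inv] using Tendsto.const_mul_atTop hb2 h0.inv_tendsto_nhdsGT_zero
    exact tendsto_neg_atTop_atBot.comp h1
  · have hcont : ContinuousAt
        (fun y : ℝ => d + ∑ t ∈ univ.erase s, b t ^ 2 / (y - ν t) - y) (ν s) := by
      refine ContinuousAt.sub (ContinuousAt.add continuousAt_const ?_) continuousAt_id
      refine tendsto_finset_sum _ fun t ht => ?_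
      exact ContinuousAt.div continuousAt_const (continuousAt_id.sub continuousAt_const)
        (sub_ne_zero.mpr fun hEq => (Finset.mem_erase.mp ht).1 (hν hEq).symm)
    exact hcont.tendsto.mono_left nhdsWithin_le_nhds

def S (ν : Fin m → ℝ) (k : Fin (m + 1)) : Set ℝ :=
  {x | (∀ s : Fin m, (s : ℕ) < (k : ℕ) → x < ν s) ∧
       (∀ s : Fin m, (k : ℕ) ≤ (s : ℕ) → ν s < x)}

theorem S_not_mem_Icc {ν : Fin m → ℝ} {k : Fin (m + 1)} {x y : ℝ}
    (hx : x ∈ S ν k) (hy : y ∈ S ν k) (s : Fin m) : ν s ∉ Set.Icc x y := by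
  intro hmem
  rcases lt_or_ge (s : ℕ) (k : ℕ) with h | h
  · exact absurd hmem.2 (not_le.mpr (hy.1 s h))
  · exact absurd hmem.1 (not_le.mpr (hx.2 s h))

theorem S_ne {ν : Fin m → ℝ} {k : Fin (m + 1)} {x : ℝ} (hx : x ∈ S ν k) (s : Fin m) :
    x ≠ ν s := by
  rcases lt_or_ge (s : ℕ) (k : ℕ) with h | h
  · exact ne_of_lt (hx.1 s h)
  · exact (ne_of_lt (hx.2 s h)).symm

theorem root_unique (d : ℝ) (b ν : Fin m → ℝ) {k : Fin (m + 1)} {x y : ℝ}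
    (hx : x ∈ S ν k) (hy : y ∈ S ν k)
    (hfx : secular d b ν x = 0) (hfy : secular d b ν y = 0) : x = y := by
  rcases lt_trichotomy x y with h | h | h
  · have := mono d b ν h (fun s => S_not_mem_Icc hx hy s)
    rw [hfx, hfy] at this; exact absurd this (lt_irrefl 0)
  · exact h
  · have := mono d b ν h (fun s => S_not_mem_Icc hy hx s)
    rw [hfx, hfy] at this; exact absurd this (lt_irrefl 0)

theorem exists_root (d : ℝ) (b ν : Fin m → ℝ) (hν : StrictAnti ν) (hb : ∀ s, b s ≠ 0)
    (k : Fin (m + 1)) : ∃ x, x ∈ S ν k ∧ secular d b ν x = 0 := by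
  have hpos : ∃ x, x ∈ S ν k ∧ 0 < secular d b ν x := by
    rcases lt_or_ge (k : ℕ) m with hk | hk
    · set s0 : Fin m := ⟨(k : ℕ), hk⟩ with hs0
      have h1 : ∀ᶠ x in 𝓝[>] (ν s0), 0 < secular d b ν x :=
        (tendsto_nhdsGT d b ν hν.injective hb s0).eventually_gt_atTop 0
      have h2 : ∀ᶠ x in 𝓝[>] (ν s0), x ∈ S ν k := by
        have hA : ∀ s : Fin m, ∀ᶠ x in 𝓝[>] (ν s0),
            ((s : ℕ) < (k : ℕ) → x < ν s) ∧ ((k : ℕ) ≤ (s : ℕ) → ν s < x) := by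
          intro s
          have hlt : ∀ᶠ x in 𝓝[>] (ν s0), (s : ℕ) < (k : ℕ) → x < ν s := by
            rcases lt_or_ge (s : ℕ) (k : ℕ) with h | h
            · have hss : ν s0 < ν s := hν (Fin.lt_def.mpr h)
              filter_upwards [nhdsWithin_le_nhds (Iio_mem_nhds hss)] with x hx
              exact fun _ => hx
            · filter_upwards with x
              exact fun hcon => absurd hcon (not_lt.mpr h)
          have hge : ∀ᶠ x in 𝓝[>] (ν s0), (k : ℕ) ≤ (s : ℕ) → ν s < x := by
            rcases le_or_gt (k : ℕ) (s : ℕ) with h | h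
            · have hss : ν s ≤ ν s0 := hν.antitone (Fin.le_def.mpr h)
              filter_upwards [self_mem_nhdsWithin] with x hx
              exact fun _ => lt_of_le_of_lt hss hx.out
            · filter_upwards with x
              exact fun hcon => absurd hcon (not_le.mpr h)
          exact hlt.and hge
        exact (eventually_all.mpr hA).mono fun x h =>
          ⟨fun s => (h s).1, fun s => (h s).2⟩
      obtain ⟨x, hxp, hxS⟩ := (h1.and h2).exists
      exact ⟨x, hxS, hxp⟩
    · have h1 : ∀ᶠ x in atBot, 0 < secular d b ν x :=
        (tendsto_atBot d b ν).eventually_gt_atTop 0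
      have h2 : ∀ᶠ x in (atBot : Filter ℝ), x ∈ S ν k := by
        have hA : ∀ s : Fin m, ∀ᶠ x in (atBot : Filter ℝ),
            ((s : ℕ) < (k : ℕ) → x < ν s) ∧ ((k : ℕ) ≤ (s : ℕ) → ν s < x) := by
          intro s
          have hlt : ∀ᶠ x in (atBot : Filter ℝ), x < ν s := eventually_lt_atBot (ν s)
          filter_upwards [hlt] with x hx
          refine ⟨fun _ => hx, fun hcon => absurd hcon ?_⟩
          have := s.isLt
          omega
        exact (eventually_all.mpr hA).mono fun x h =>
          ⟨fun s => (h s).1, fun s => (h s).2⟩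
      obtain ⟨x, hxp, hxS⟩ := (h1.and h2).exists
      exact ⟨x, hxS, hxp⟩
  have hneg : ∃ x, x ∈ S ν k ∧ secular d b ν x < 0 := by
    rcases Nat.eq_zero_or_pos (k : ℕ) with hk | hk
    · have h1 : ∀ᶠ x in atTop, secular d b ν x < 0 :=
        (tendsto_atTop d b ν).eventually_lt_atBot 0
      have h2 : ∀ᶠ x in (atTop : Filter ℝ), x ∈ S ν k := by
        have hA : ∀ s : Fin m, ∀ᶠ x in (atTop : Filter ℝ),
            ((s : ℕ) < (k : ℕ) → x < ν s) ∧ ((k : ℕ) ≤ (s : ℕ) → ν s < x) := by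
          intro s
          filter_upwards [eventually_gt_atTop (ν s)] with x hx
          exact ⟨fun hcon => absurd hcon (by omega), fun _ => hx⟩
        exact (eventually_all.mpr hA).mono fun x h =>
          ⟨fun s => (h s).1, fun s => (h s).2⟩
      obtain ⟨x, hxn, hxS⟩ := (h1.and h2).exists
      exact ⟨x, hxS, hxn⟩
    · have hk1 : (k : ℕ) - 1 < m := by
        have := k.isLt; omega
      set s1 : Fin m := ⟨(k : ℕ) - 1, hk1⟩ with hs1
      have h1 : ∀ᶠ x in 𝓝[<] (ν s1), secular d b ν x < 0 :=
        (tendsto_nhdsLT d b ν hν.injective hb s1).eventually_lt_atBot 0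
      have h2 : ∀ᶠ x in 𝓝[<] (ν s1), x ∈ S ν k := by
        have hA : ∀ s : Fin m, ∀ᶠ x in 𝓝[<] (ν s1),
            ((s : ℕ) < (k : ℕ) → x < ν s) ∧ ((k : ℕ) ≤ (s : ℕ) → ν s < x) := by
          intro s
          have hlt : ∀ᶠ x in 𝓝[<] (ν s1), (s : ℕ) < (k : ℕ) → x < ν s := by
            rcases lt_or_ge (s : ℕ) (k : ℕ) with h | h
            · have hss : ν s1 ≤ ν s := hν.antitone (by
                rw [hs1]; exact Fin.mk_le_mk.mpr (by omega))
              filter_upwards [self_mem_nhdsWithin] with x hx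
              exact fun _ => lt_of_lt_of_le hx.out hss
            · filter_upwards with x
              exact fun hcon => absurd hcon (not_lt.mpr h)
          have hge : ∀ᶠ x in 𝓝[<] (ν s1), (k : ℕ) ≤ (s : ℕ) → ν s < x := by
            rcases le_or_gt (k : ℕ) (s : ℕ) with h | h
            · have hss : ν s < ν s1 := hν (by
                rw [hs1]; exact Fin.mk_lt_mk.mpr (by omega))
              filter_upwards [nhdsWithin_le_nhds (Ioi_mem_nhds hss)] with x hx
              exact fun _ => hx
            · filter_upwards with x
              exact fun hcon => absurd hcon (not_le.mpr h)
          exact hlt.and hge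
        exact (eventually_all.mpr hA).mono fun x h =>
          ⟨fun s => (h s).1, fun s => (h s).2⟩
      obtain ⟨x, hxn, hxS⟩ := (h1.and h2).exists
      exact ⟨x, hxS, hxn⟩
  obtain ⟨x1, hx1S, hx1⟩ := hpos
  obtain ⟨x2, hx2S, hx2⟩ := hneg
  have hlt : x1 < x2 := by
    rcases lt_trichotomy x1 x2 with h | h | h
    · exact h
    · subst h; linarith
    · have := mono d b ν h (fun s => S_not_mem_Icc hx2S hx1S s)
      linarith
  have hsub : Set.Icc x1 x2 ⊆ S ν k := by
    intro z hz
    constructor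
    · intro s hs
      exact lt_of_le_of_lt hz.2 (hx2S.1 s hs)
    · intro s hs
      exact lt_of_lt_of_le (hx1S.2 s hs) hz.1
  have hcont : ContinuousOn (secular d b ν) (Set.Icc x1 x2) := fun z hz =>
    (secular_continuousAt d b ν (fun s => S_ne (hsub hz) s)).continuousWithinAt
  obtain ⟨z, hzIcc, hz0⟩ := intermediate_value_Icc' hlt.le hcont
    (show (0 : ℝ) ∈ Set.Icc (secular d b ν x2) (secular d b ν x1) from ⟨hx2.le, hx1.le⟩)
  exact ⟨z, hsub hzIcc, hz0⟩

theorem mulVec_zero_eq (d : ℝ) (b ν : Fin m → ℝ) (v : Fin (m + 1) → ℝ) :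
    (arrowhead d b ν).mulVec v 0 = d * v 0 + ∑ t, b t * v t.succ := by
  simp [arrowhead, Matrix.mulVec, dotProduct, Fin.sum_univ_succ]

theorem mulVec_succ_eq (d : ℝ) (b ν : Fin m → ℝ) (v : Fin (m + 1) → ℝ) (t : Fin m) :
    (arrowhead d b ν).mulVec v t.succ = b t * v 0 + ν t * v t.succ := by
  simp [arrowhead, Matrix.mulVec, dotProduct, Fin.sum_univ_succ, ite_mul]

theorem mem_spectrum_iff (d : ℝ) (b ν : Fin m → ℝ) (hν : Function.Injective ν)
    (hb : ∀ s, b s ≠ 0) (lam : ℝ) :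
    lam ∈ spectrum ℝ (arrowhead d b ν) ↔
      (∀ s, lam ≠ ν s) ∧ secular d b ν lam = 0 := by
  have hkey : lam ∈ spectrum ℝ (arrowhead d b ν) ↔
      ∃ v : Fin (m + 1) → ℝ, v ≠ 0 ∧ (arrowhead d b ν).mulVec v = lam • v := by
    rw [spectrum.mem_iff, Matrix.isUnit_iff_isUnit_det, isUnit_iff_ne_zero, not_ne_iff,
      ← Matrix.exists_mulVec_eq_zero_iff]
    have halg : ∀ v : Fin (m + 1) → ℝ,
        (algebraMap ℝ (Matrix (Fin (m + 1)) (Fin (m + 1)) ℝ) lam - arrowhead d b ν).mulVec v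
          = lam • v - (arrowhead d b ν).mulVec v := by
      intro v
      rw [Matrix.sub_mulVec, Algebra.algebraMap_eq_smul_one, Matrix.smul_mulVec,
        Matrix.one_mulVec]
    constructor
    · rintro ⟨v, hv0, hv⟩
      rw [halg v] at hv
      exact ⟨v, hv0, (sub_eq_zero.mp hv).symm⟩
    · rintro ⟨v, hv0, hv⟩
      refine ⟨v, hv0, ?_⟩
      rw [halg v, hv, sub_self]
  rw [hkey]
  constructor
  · rintro ⟨v, hv0, hv⟩
    have hrow0 : d * v 0 + ∑ t, b t * v t.succ = lam * v 0 := by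
      have h := congrFun hv 0
      rw [mulVec_zero_eq] at h
      simpa using h
    have hrow : ∀ t : Fin m, b t * v 0 + ν t * v t.succ = lam * v t.succ := by
      intro t
      have h := congrFun hv t.succ
      rw [mulVec_succ_eq] at h
      simpa using h
    have hne : ∀ s, lam ≠ ν s := by
      intro s hEq
      have hv00 : v 0 = 0 := by
        have h := hrow s
        rw [hEq] at h
        have h2 : b s * v 0 = 0 := by linarith
        exact (mul_eq_zero.mp h2).resolve_left (hb s)
      have hvt : ∀ t : Fin m, t ≠ s → v t.succ = 0 := by
        intro t hts
        have h := hrow t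
        rw [hEq, hv00, mul_zero, zero_add] at h
        have hne2 : ν t - ν s ≠ 0 := sub_ne_zero.mpr fun hh => hts (hν hh)
        have h2 : (ν t - ν s) * v t.succ = 0 := by ring_nf; linarith
        exact (mul_eq_zero.mp h2).resolve_left hne2
      have hvs : v s.succ = 0 := by
        have h0 := hrow0
        rw [hv00, mul_zero, zero_add, hEq, mul_zero] at h0
        rw [Finset.sum_eq_single s (fun t _ ht => by rw [hvt t ht, mul_zero])
          (by simp)] at h0
        exact (mul_eq_zero.mp h0).resolve_left (hb s)
      apply hv0
      funext i
      refine Fin.cases hv00 (fun t => ?_) i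
      by_cases hts : t = s
      · rw [hts]; exact hvs
      · exact hvt t hts
    refine ⟨hne, ?_⟩
    have hv00 : v 0 ≠ 0 := by
      intro h0
      apply hv0
      funext i
      refine Fin.cases h0 (fun t => ?_) i
      have h := hrow t
      rw [h0, mul_zero, zero_add] at h
      have hD : lam - ν t ≠ 0 := sub_ne_zero.mpr (hne t)
      have h2 : (lam - ν t) * v t.succ = 0 := by ring_nf; linarith
      exact (mul_eq_zero.mp h2).resolve_left hD
    have hval : ∀ t, v t.succ = b t * v 0 / (lam - ν t) := by
      intro t
      have hD : lam - ν t ≠ 0 := sub_ne_zero.mpr (hne t)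
      have h := hrow t
      field_simp
      nlinarith [h]
    have hsum : ∑ t, b t * v t.succ = (∑ t, b t ^ 2 / (lam - ν t)) * v 0 := by
      rw [Finset.sum_mul]
      refine Finset.sum_congr rfl fun t _ => ?_
      rw [hval t]; ring
    rw [hsum] at hrow0
    have hfin : secular d b ν lam * v 0 = 0 := by
      unfold secular
      nlinarith [hrow0]
    exact (mul_eq_zero.mp hfin).resolve_right hv00
  · rintro ⟨hne, hsec⟩
    refine ⟨Fin.cons 1 (fun t => b t / (lam - ν t)), ?_, ?_⟩
    · intro h
      have := congrFun h 0
      simp [Fin.cons_zero] at this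
    · funext i
      refine Fin.cases ?_ (fun t => ?_) i
      · rw [mulVec_zero_eq]
        simp only [Fin.cons_zero, Fin.cons_succ, Pi.smul_apply, smul_eq_mul]
        have hS : ∑ t, b t * (b t / (lam - ν t)) = ∑ t, b t ^ 2 / (lam - ν t) :=
          Finset.sum_congr rfl fun t _ => by ring
        rw [hS]
        unfold secular at hsec
        linarith
      · rw [mulVec_succ_eq]
        simp only [Fin.cons_zero, Fin.cons_succ, Pi.smul_apply, smul_eq_mul]
        have hD : lam - ν t ≠ 0 := sub_ne_zero.mpr (hne t)
        field_simp
        ring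

end Stmt4Aux

/-- for the arrowhead matrix with strictly decreasing diagonal `ν` and
nonzero couplings `b`, the secular function `y ↦ d + ∑_s b_s²/(y - ν_s) - y` is
strictly decreasing on each component interval of `ℝ \\ {ν_s}`, blows up to `+∞` at
each left endpoint and to `-∞` at each right endpoint; consequently the matrix has
`m+1` distinct eigenvalues strictly interlacing the `ν`'s. -/
theorem stmt4 {m : ℕ} (d : ℝ) (b ν : Fin m → ℝ)
    (hν : StrictAnti ν) (hb : ∀ s, b s ≠ 0) :
    (∀ x y : ℝ, x < y → (∀ s, ν s ∉ Set.Icc x y) →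
        (d + ∑ s, b s ^ 2 / (y - ν s) - y) < (d + ∑ s, b s ^ 2 / (x - ν s) - x)) ∧
    (∀ s, Tendsto (fun y : ℝ => d + ∑ s, b s ^ 2 / (y - ν s) - y)
        (𝓝[>] (ν s)) atTop) ∧
    (∀ s, Tendsto (fun y : ℝ => d + ∑ s, b s ^ 2 / (y - ν s) - y)
        (𝓝[<] (ν s)) atBot) ∧
    Tendsto (fun y : ℝ => d + ∑ s, b s ^ 2 / (y - ν s) - y) atTop atBot ∧
    Tendsto (fun y : ℝ => d + ∑ s, b s ^ 2 / (y - ν s) - y) atBot atTop ∧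
    ∃ lam : Fin (m + 1) → ℝ, StrictAnti lam ∧
      spectrum ℝ (arrowhead d b ν) = Set.range lam ∧
      ∀ s : Fin m, lam s.castSucc > ν s ∧ ν s > lam s.succ := by
  classical
  refine ⟨fun x y hxy h => Stmt4Aux.mono d b ν hxy h,
    fun s => Stmt4Aux.tendsto_nhdsGT d b ν hν.injective hb s,
    fun s => Stmt4Aux.tendsto_nhdsLT d b ν hν.injective hb s,
    Stmt4Aux.tendsto_atTop d b ν, Stmt4Aux.tendsto_atBot d b ν, ?_⟩
  choose lam hlamS hlam0 using fun k => Stmt4Aux.exists_root d b ν hν hb k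
  have hanti : StrictAnti lam := by
    intro k l hkl
    have hkm : (k : ℕ) < m := lt_of_lt_of_le (Fin.lt_def.mp hkl) (Nat.lt_succ_iff.mp l.isLt)
    have h1 : ν ⟨(k : ℕ), hkm⟩ < lam k := (hlamS k).2 ⟨(k : ℕ), hkm⟩ (le_refl _)
    have h2 : lam l < ν ⟨(k : ℕ), hkm⟩ := (hlamS l).1 ⟨(k : ℕ), hkm⟩ (Fin.lt_def.mp hkl)
    linarith
  refine ⟨lam, hanti, ?_, ?_⟩
  · ext x
    rw [Stmt4Aux.mem_spectrum_iff d b ν hν.injective hb x]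
    constructor
    · rintro ⟨hne, hsec⟩
      set K := (univ.filter (fun s : Fin m => x < ν s)).card with hKdef
      have hKle : K ≤ m := le_trans (Finset.card_filter_le _ _) (by simp)
      set k : Fin (m + 1) := ⟨K, Nat.lt_succ_of_le hKle⟩ with hkdef
      have hkv : (k : ℕ) = K := rfl
      have hxS : x ∈ Stmt4Aux.S ν k := by
        constructor
        · intro s hs
          by_contra hcon
          have hxlt : ν s < x := lt_of_le_of_ne (not_lt.mp hcon) (Ne.symm (hne s))
          have hsubset : univ.filter (fun t : Fin m => x < ν t) ⊆ Finset.Iio s := by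
            intro t ht
            rw [Finset.mem_filter] at ht
            rw [Finset.mem_Iio]
            exact hν.lt_iff_gt.mp (lt_trans hxlt ht.2)
          have hcard := Finset.card_le_card hsubset
          rw [Fin.card_Iio] at hcard
          omega
        · intro s hs
          by_contra hcon
          have hxlt : x < ν s := lt_of_le_of_ne (not_lt.mp hcon) (hne s)
          have hsubset : Finset.Iic s ⊆ univ.filter (fun t : Fin m => x < ν t) := by
            intro t ht
            rw [Finset.mem_Iic] at ht
            rw [Finset.mem_filter]
            exact ⟨mem_univ _, lt_of_lt_of_le hxlt (hν.antitone ht)⟩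
          have hcard := Finset.card_le_card hsubset
          rw [Fin.card_Iic] at hcard
          omega
      exact ⟨k, Stmt4Aux.root_unique d b ν (hlamS k) hxS (hlam0 k) hsec⟩
    · rintro ⟨k, rfl⟩
      exact ⟨fun s => Stmt4Aux.S_ne (hlamS k) s, hlam0 k⟩
  · intro s
    constructor
    · exact (hlamS s.castSucc).2 s (le_of_eq (Fin.coe_castSucc s))
    · exact (hlamS s.succ).1 s (by simp)
end
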